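/- Let 0 < β ≤ 1/2 and 0 ≤ α ≤ β/2, and let A = {a_1 < a_2 < ...} and B = {b_1 < b_2 < ...} be two infinite subsets of ℕ such that (1) a_i − b_i = o(a_i^{β−α}) as i → ∞; (2) A(n) − B(n) = O(n^{α}); and (3) there is a constant c > 0 with A(n) ≤ c·n^{β} and B(n) ≤ c·n^{β} for all n ∈ ℕ. Then Σ_{n ≤ x} ( Σ_{a ∈ A, a ≤ n} a − Σ_{b ∈ B, b ≤ n} b )^2 = o(x^{2+2β}) as x → ∞. -/

import Mathlib

open Filter Asymptotics

/-- The counting function `A(n) = |{a ∈ A : a ≤ n}|`. -/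
noncomputable def countFn (A : Set ℕ) (n : ℕ) : ℕ := (A ∩ Set.Iic n).ncard

/-- `∑_{a ∈ A, a ≤ n} a`, as a real number. -/
noncomputable def sumFn (A : Set ℕ) (n : ℕ) : ℝ :=
  ∑ a ∈ Finset.range (n + 1), Set.indicator A (fun x => (x : ℝ)) a

lemma countFn_eq_card (A : Set ℕ) [DecidablePred (· ∈ A)] (n : ℕ) :
    countFn A n = ((Finset.range (n+1)).filter (· ∈ A)).card := by
  rw [countFn, ← Set.ncard_coe_finset]
  congr 1
  ext a
  simp [Nat.lt_succ_iff, and_comm]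

lemma countFn_eq_count (A : Set ℕ) [DecidablePred (· ∈ A)] (n : ℕ) :
    countFn A n = Nat.count (· ∈ A) (n + 1) := by
  rw [Nat.count_eq_card_filter_range, countFn, ← Set.ncard_coe_finset]
  congr 1; ext a; simp [Nat.lt_succ_iff, and_comm]

lemma countFn_mono (A : Set ℕ) : Monotone (countFn A) := by
  classical
  intro m n h
  rw [countFn_eq_count, countFn_eq_count]
  exact Nat.count_monotone _ (by omega)

lemma nth_le_iff (A : Set ℕ) [DecidablePred (· ∈ A)] (hA : A.Infinite) (i n : ℕ) :
    Nat.nth (· ∈ A) i ≤ n ↔ i < countFn A n := by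
  have hinf : (setOf (· ∈ A)).Infinite := hA
  rw [countFn_eq_count]
  constructor
  · intro h
    have h1 : Nat.count (· ∈ A) (Nat.nth (· ∈ A) i + 1) ≤ Nat.count (· ∈ A) (n + 1) :=
      Nat.count_monotone _ (by omega)
    rw [Nat.count_succ, Nat.count_nth_of_infinite hinf] at h1
    simp [Nat.nth_mem_of_infinite hinf] at h1
    omega
  · intro h
    have := Nat.nth_lt_of_lt_count h
    omega

lemma countFn_eq_sum (A : Set ℕ) [DecidablePred (· ∈ A)] (n : ℕ) :
    (countFn A n : ℝ) = ∑ a ∈ Finset.range (n+1), (if a ∈ A then (1:ℝ) else 0) := by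
  rw [countFn_eq_card, Finset.card_filter]
  push_cast
  rfl

lemma sumFn_abel (A : Set ℕ) [DecidablePred (· ∈ A)] (n : ℕ) :
    sumFn A n = ∑ m ∈ Finset.range (n+1), ((countFn A n : ℝ) - (countFn A m : ℝ)) := by
  have key : ∀ m ∈ Finset.range (n+1), (countFn A n : ℝ) - (countFn A m : ℝ)
      = ∑ a ∈ Finset.range (n+1), (if a ∈ A then (1:ℝ) else 0) * (if m < a then 1 else 0) := by
    intro m hm
    simp only [Finset.mem_range] at hm
    rw [countFn_eq_sum, countFn_eq_sum]
    have h1 : ∑ a ∈ Finset.range (m+1), (if a ∈ A then (1:ℝ) else 0)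
        = ∑ a ∈ Finset.range (n+1), (if a ∈ A then (1:ℝ) else 0) * (if a ≤ m then 1 else 0) := by
      have : Finset.range (m+1) = (Finset.range (n+1)).filter (· ≤ m) := by
        ext a; simp [Nat.lt_succ_iff]; omega
      rw [this, Finset.sum_filter]
      apply Finset.sum_congr rfl
      intro a _
      split_ifs <;> simp
    rw [h1, ← Finset.sum_sub_distrib]
    apply Finset.sum_congr rfl
    intro a _
    split_ifs <;> simp <;> omega
  rw [Finset.sum_congr rfl key, Finset.sum_comm]
  apply Finset.sum_congr rfl
  intro a ha
  simp only [Finset.mem_range, Nat.lt_succ_iff] at ha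
  rw [← Finset.mul_sum]
  have h2 : ∑ m ∈ Finset.range (n+1), (if m < a then (1:ℝ) else 0) = a := by
    rw [Finset.sum_boole]
    have : (Finset.range (n+1)).filter (· < a) = Finset.range a := by
      ext m; simp [Nat.lt_succ_iff]; omega
    rw [this]
    simp
  rw [h2, Set.indicator_apply]
  split_ifs <;> simp

lemma countFn_eq_nth_sum (A : Set ℕ) [DecidablePred (· ∈ A)] (hA : A.Infinite) (n K : ℕ)
    (hK : countFn A n ≤ K) :
    (countFn A n : ℝ) = ∑ i ∈ Finset.range K, (if Nat.nth (· ∈ A) i ≤ n then (1:ℝ) else 0) := by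
  rw [Finset.sum_boole]
  have h : (Finset.range K).filter (fun i => Nat.nth (· ∈ A) i ≤ n)
      = Finset.range (countFn A n) := by
    ext i
    simp only [Finset.mem_filter, Finset.mem_range, nth_le_iff A hA]
    omega
  rw [h]; simp

lemma sum_indicator_diff_le (a b x : ℕ) :
    ∑ n ∈ Finset.range (x+1), |(if a ≤ n then (1:ℝ) else 0) - (if b ≤ n then 1 else 0)|
      ≤ if min a b ≤ x then |(a:ℝ) - (b:ℝ)| else 0 := by
  by_cases hmin : min a b ≤ x
  · simp only [if_pos hmin]
    have hterm : ∀ n ∈ Finset.range (x+1),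
        |(if a ≤ n then (1:ℝ) else 0) - (if b ≤ n then 1 else 0)|
        = if (min a b ≤ n ∧ n < max a b) then 1 else 0 := by
      intro n _
      rcases le_total a b with h | h <;> split_ifs <;> simp_all <;> omega
    rw [Finset.sum_congr rfl hterm, Finset.sum_boole]
    have hsub : (Finset.range (x+1)).filter (fun n => min a b ≤ n ∧ n < max a b)
        ⊆ Finset.Ico (min a b) (max a b) := by
      intro n hn; simp only [Finset.mem_filter, Finset.mem_range, Finset.mem_Ico] at hn ⊢; omega
    have hcard := (Finset.card_le_card hsub).trans_eq (Nat.card_Ico _ _)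
    calc ((Finset.filter (fun n => min a b ≤ n ∧ n < max a b) (Finset.range (x+1))).card : ℝ)
        ≤ ((max a b - min a b : ℕ) : ℝ) := by exact_mod_cast hcard
      _ = |(a:ℝ) - (b:ℝ)| := by
          rcases le_total a b with h | h
          · rw [max_eq_right h, min_eq_left h, Nat.cast_sub h, abs_sub_comm,
              abs_of_nonneg (sub_nonneg.2 (by exact_mod_cast h))]
          · rw [max_eq_left h, min_eq_right h, Nat.cast_sub h,
              abs_of_nonneg (sub_nonneg.2 (by exact_mod_cast h))]
  · simp only [if_neg hmin]
    have : ∀ n ∈ Finset.range (x+1),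
        |(if a ≤ n then (1:ℝ) else 0) - (if b ≤ n then 1 else 0)| = 0 := by
      intro n hn
      simp only [Finset.mem_range, Nat.lt_succ_iff] at hn
      rw [if_neg (by omega), if_neg (by omega)]
      simp
    rw [Finset.sum_congr rfl this]
    simp

lemma sq_sub_le_two (u v : ℝ) : (u - v)^2 ≤ 2*u^2 + 2*v^2 := by nlinarith [sq_nonneg (u+v)]

lemma sq_add_le_two (u v : ℝ) : (u + v)^2 ≤ 2*u^2 + 2*v^2 := by nlinarith [sq_nonneg (u-v)]

set_option maxHeartbeats 2000000 in
theorem stmt8 (β α : ℝ) (hβ0 : 0 < β) (hβ1 : β ≤ 1 / 2)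
    (hα0 : 0 ≤ α) (hα1 : α ≤ β / 2)
    (A B : Set ℕ) (hA : A.Infinite) (hB : B.Infinite)
    (h1 : (fun i : ℕ => (Nat.nth (· ∈ A) i : ℝ) - (Nat.nth (· ∈ B) i : ℝ))
      =o[atTop] fun i : ℕ => (Nat.nth (· ∈ A) i : ℝ) ^ (β - α))
    (h2 : (fun n : ℕ => (countFn A n : ℝ) - (countFn B n : ℝ))
      =O[atTop] fun n : ℕ => (n : ℝ) ^ α)
    (h3 : ∃ c : ℝ, 0 < c ∧ ∀ n : ℕ,
      (countFn A n : ℝ) ≤ c * (n : ℝ) ^ β ∧ (countFn B n : ℝ) ≤ c * (n : ℝ) ^ β) :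
    (fun x : ℕ => ∑ n ∈ Finset.range (x + 1), (sumFn A n - sumFn B n) ^ 2)
      =o[atTop] fun x : ℕ => (x : ℝ) ^ (2 + 2 * β) := by
  classical
  obtain ⟨c, hc, h3⟩ := h3
  set a : ℕ → ℕ := Nat.nth (· ∈ A) with ha_def
  set b : ℕ → ℕ := Nat.nth (· ∈ B) with hb_def
  set D : ℕ → ℝ := fun n => (countFn A n : ℝ) - (countFn B n : ℝ) with hD_def
  set K : ℕ → ℕ := fun x => countFn A x + countFn B x with hK_def
  set G : ℕ → ℝ := fun x => ∑ i ∈ Finset.range (K x),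
    (if min (a i) (b i) ≤ x then |(a i : ℝ) - (b i : ℝ)| else 0) with hG_def
  have hG_nonneg : ∀ x, 0 ≤ G x := by
    intro x
    apply Finset.sum_nonneg
    intro i _
    split_ifs <;> [exact abs_nonneg _; exact le_refl 0]
  -- F1 : D as a sum of indicator differences
  have F1 : ∀ x n : ℕ, n ≤ x → D n = ∑ i ∈ Finset.range (K x),
      ((if a i ≤ n then (1:ℝ) else 0) - (if b i ≤ n then 1 else 0)) := by
    intro x n hnx
    rw [Finset.sum_sub_distrib, hD_def]
    rw [← countFn_eq_nth_sum A hA n (K x)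
      (le_trans (countFn_mono A hnx) (Nat.le_add_right _ _)),
      ← countFn_eq_nth_sum B hB n (K x)
      (le_trans (countFn_mono B hnx) (Nat.le_add_left _ _))]
  -- F2 : partial sums of |D| are bounded by G
  have F2 : ∀ x : ℕ, ∑ n ∈ Finset.range (x+1), |D n| ≤ G x := by
    intro x
    have step1 : ∀ n ∈ Finset.range (x+1), |D n| ≤ ∑ i ∈ Finset.range (K x),
        |(if a i ≤ n then (1:ℝ) else 0) - (if b i ≤ n then 1 else 0)| := by
      intro n hn
      simp only [Finset.mem_range, Nat.lt_succ_iff] at hn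
      rw [F1 x n hn]
      exact Finset.abs_sum_le_sum_abs _ _
    calc ∑ n ∈ Finset.range (x+1), |D n|
        ≤ ∑ n ∈ Finset.range (x+1), ∑ i ∈ Finset.range (K x),
            |(if a i ≤ n then (1:ℝ) else 0) - (if b i ≤ n then 1 else 0)| :=
          Finset.sum_le_sum step1
      _ = ∑ i ∈ Finset.range (K x), ∑ n ∈ Finset.range (x+1),
            |(if a i ≤ n then (1:ℝ) else 0) - (if b i ≤ n then 1 else 0)| := Finset.sum_comm
      _ ≤ G x := Finset.sum_le_sum (fun i _ => sum_indicator_diff_le (a i) (b i) x)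
  -- F3 : |E n| ≤ G n
  have F3 : ∀ n : ℕ, |∑ m ∈ Finset.range (n+1), D m| ≤ G n := by
    intro n
    exact (Finset.abs_sum_le_sum_abs _ _).trans (F2 n)
  -- F4 : the Abel identity for S
  have F4 : ∀ n : ℕ, sumFn A n - sumFn B n
      = ((n:ℝ)+1) * D n - ∑ m ∈ Finset.range (n+1), D m := by
    intro n
    rw [sumFn_abel A n, sumFn_abel B n, ← Finset.sum_sub_distrib]
    have : ∀ m ∈ Finset.range (n+1),
        ((countFn A n : ℝ) - countFn A m) - ((countFn B n : ℝ) - countFn B m)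
        = D n - D m := by
      intro m _; simp only [hD_def]; ring
    rw [Finset.sum_congr rfl this, Finset.sum_sub_distrib, Finset.sum_const,
      Finset.card_range]
    push_cast
    ring
  -- F5 : G is monotone
  have F5 : ∀ x y : ℕ, x ≤ y → G x ≤ G y := by
    intro x y hxy
    have h1 : G x ≤ ∑ i ∈ Finset.range (K x),
        (if min (a i) (b i) ≤ y then |(a i : ℝ) - (b i : ℝ)| else 0) := by
      apply Finset.sum_le_sum
      intro i _
      split_ifs with p q q
      · exact le_refl _
      · exact absurd (le_trans p hxy) q
      · exact abs_nonneg _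
      · exact le_refl 0
    refine h1.trans (Finset.sum_le_sum_of_subset_of_nonneg ?_ ?_)
    · exact Finset.range_subset_range.2 (Nat.add_le_add (countFn_mono A hxy) (countFn_mono B hxy))
    · intro i _ _
      split_ifs <;> [exact abs_nonneg _; exact le_refl 0]
  
  -- Setup for the epsilon argument
  rw [isLittleO_iff]
  intro ε hε
  obtain ⟨C, hC, hCO⟩ := h2.exists_pos
  rw [isBigOWith_iff, eventually_atTop] at hCO
  obtain ⟨N1, hN1⟩ := hCO
  set ε' : ℝ := min (1/2) (min (ε/(128*C*c)) (ε/(1024*c^2))) with hε'_def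
  have hε'_pos : 0 < ε' := by
    apply lt_min (by norm_num)
    apply lt_min <;> positivity
  have hε'_half : ε' ≤ 1/2 := min_le_left _ _
  have hε'1 : ε' ≤ ε/(128*C*c) := le_trans (min_le_right _ _) (min_le_left _ _)
  have hε'2 : ε' ≤ ε/(1024*c^2) := le_trans (min_le_right _ _) (min_le_right _ _)
  have h1' := h1.def hε'_pos
  rw [eventually_atTop] at h1'
  obtain ⟨N, hN⟩ := h1'
  set CN : ℝ := ∑ i ∈ Finset.range N, |(a i : ℝ) - (b i : ℝ)| with hCN_def
  have hCN0 : 0 ≤ CN := Finset.sum_nonneg (fun i _ => abs_nonneg _)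
  set C2 : ℝ := ∑ n ∈ Finset.range N1, ((n:ℝ)+1)^2 * (D n)^2 with hC2_def
  have hC20 : 0 ≤ C2 := Finset.sum_nonneg (fun n _ => by positivity)
  -- F6 : bound on G
  have F6 : ∀ x : ℕ, 1 ≤ x → G x ≤ CN + (4*c*ε') * (x:ℝ)^(2*β-α) := by
    intro x hx1
    have hx0 : (0:ℝ) < x := by exact_mod_cast hx1
    have hxR : (1:ℝ) ≤ x := by exact_mod_cast hx1
    have hQ0 : (0:ℝ) ≤ (x:ℝ)^(β-α) := Real.rpow_nonneg hx0.le _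
    have tail : ∀ i, N ≤ i →
        (if min (a i) (b i) ≤ x then |(a i:ℝ) - (b i:ℝ)| else 0)
          ≤ ε' * (2 * (x:ℝ)^(β-α)) := by
      intro i hi
      split_ifs with hm
      · have habs : |(a i:ℝ) - (b i:ℝ)| ≤ ε' * (a i:ℝ)^(β-α) := by
          have h := hN i hi
          rwa [Real.norm_eq_abs, Real.norm_eq_abs,
            abs_of_nonneg (Real.rpow_nonneg (Nat.cast_nonneg _) _)] at h
        have hai2x : (a i : ℝ) ≤ 2 * x := by
          rcases min_le_iff.1 hm with h | h
          · have : (a i:ℝ) ≤ x := by exact_mod_cast h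
            linarith
          · by_cases h1a : a i = 0
            · rw [h1a]; push_cast; linarith
            · have h1a' : (1:ℝ) ≤ (a i : ℝ) := by
                exact_mod_cast Nat.one_le_iff_ne_zero.2 h1a
              have hpow : (a i:ℝ)^(β-α) ≤ (a i:ℝ) := by
                calc (a i:ℝ)^(β-α) ≤ (a i:ℝ)^(1:ℝ) :=
                      Real.rpow_le_rpow_of_exponent_le h1a' (by linarith)
                  _ = (a i:ℝ) := Real.rpow_one _
              have hbx : (b i:ℝ) ≤ x := by exact_mod_cast h
              have hle : (a i:ℝ) - (b i:ℝ) ≤ |(a i:ℝ) - (b i:ℝ)| := le_abs_self _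
              have hpownn : (0:ℝ) ≤ (a i:ℝ)^(β-α) := Real.rpow_nonneg (Nat.cast_nonneg _) _
              have hmm : ε' * (a i:ℝ)^(β-α) ≤ (1/2) * (a i:ℝ) := by
                have := mul_le_mul hε'_half hpow hpownn (by norm_num)
                linarith
              linarith
        have h2x : (a i:ℝ)^(β-α) ≤ 2 * (x:ℝ)^(β-α) := by
          calc (a i:ℝ)^(β-α) ≤ (2*(x:ℝ))^(β-α) :=
                Real.rpow_le_rpow (Nat.cast_nonneg _) hai2x (by linarith)
            _ = (2:ℝ)^(β-α) * (x:ℝ)^(β-α) := Real.mul_rpow (by norm_num) hx0.le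
            _ ≤ 2 * (x:ℝ)^(β-α) := by
                have h21 : (2:ℝ)^(β-α) ≤ (2:ℝ)^(1:ℝ) :=
                  Real.rpow_le_rpow_of_exponent_le (by norm_num) (by linarith)
                rw [Real.rpow_one] at h21
                exact mul_le_mul_of_nonneg_right h21 hQ0
        calc |(a i:ℝ) - (b i:ℝ)| ≤ ε' * (a i:ℝ)^(β-α) := habs
          _ ≤ ε' * (2 * (x:ℝ)^(β-α)) := by
              rw [mul_le_mul_iff_right₀ hε'_pos]
              linarith
      · positivity
    have hsplit : G x ≤ CN + (K x : ℝ) * (ε' * (2 * (x:ℝ)^(β-α))) := by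
      simp only [hG_def]
      rw [← Finset.sum_filter_add_sum_filter_not (Finset.range (K x)) (· < N)]
      have hA1 : ∑ i ∈ (Finset.range (K x)).filter (· < N),
          (if min (a i) (b i) ≤ x then |(a i:ℝ) - (b i:ℝ)| else 0) ≤ CN := by
        calc ∑ i ∈ (Finset.range (K x)).filter (· < N),
              (if min (a i) (b i) ≤ x then |(a i:ℝ) - (b i:ℝ)| else 0)
            ≤ ∑ i ∈ (Finset.range (K x)).filter (· < N), |(a i:ℝ) - (b i:ℝ)| := by
              apply Finset.sum_le_sum
              intro i _
              split_ifs <;> [exact le_refl _; exact abs_nonneg _]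
          _ ≤ CN := by
              apply Finset.sum_le_sum_of_subset_of_nonneg
              · intro i hi
                simp only [Finset.mem_filter, Finset.mem_range] at hi ⊢
                exact hi.2
              · intro i _ _
                exact abs_nonneg _
      have hA2 : ∑ i ∈ (Finset.range (K x)).filter (fun i => ¬ i < N),
          (if min (a i) (b i) ≤ x then |(a i:ℝ) - (b i:ℝ)| else 0)
            ≤ (K x : ℝ) * (ε' * (2 * (x:ℝ)^(β-α))) := by
        have hcard := Finset.sum_le_card_nsmul
          ((Finset.range (K x)).filter (fun i => ¬ i < N))
          (fun i => if min (a i) (b i) ≤ x then |(a i:ℝ) - (b i:ℝ)| else 0)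
          (ε' * (2 * (x:ℝ)^(β-α))) ?_
        · have hcle : (((Finset.range (K x)).filter (fun i => ¬ i < N)).card : ℝ) ≤ (K x : ℝ) := by
            exact_mod_cast (Finset.card_filter_le _ _).trans_eq (Finset.card_range _)
          rw [nsmul_eq_mul] at hcard
          refine hcard.trans (mul_le_mul_of_nonneg_right hcle (by positivity))
        · intro i hi
          simp only [Finset.mem_filter, Finset.mem_range, not_lt] at hi
          exact tail i hi.2
      linarith
    have hKx : (K x : ℝ) ≤ 2 * c * (x:ℝ)^β := by
      have hh := h3 x
      have : (K x : ℝ) = (countFn A x : ℝ) + (countFn B x : ℝ) := by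
        rw [hK_def]; push_cast; ring
      rw [this]
      linarith [hh.1, hh.2]
    have hmulpow : (x:ℝ)^β * (x:ℝ)^(β-α) = (x:ℝ)^(2*β-α) := by
      rw [← Real.rpow_add hx0]; ring_nf
    have : (K x : ℝ) * (ε' * (2 * (x:ℝ)^(β-α)))
        ≤ (2 * c * (x:ℝ)^β) * (ε' * (2 * (x:ℝ)^(β-α))) :=
      mul_le_mul_of_nonneg_right hKx (by positivity)
    have heq : (2 * c * (x:ℝ)^β) * (ε' * (2 * (x:ℝ)^(β-α)))
        = (4*c*ε') * (x:ℝ)^(2*β-α) := by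
      rw [← hmulpow]; ring
    linarith
  -- eventual bounds
  have tend : ∀ p : ℝ, 0 < p → Tendsto (fun x : ℕ => (x:ℝ)^p) atTop atTop :=
    fun p hp => (tendsto_rpow_atTop hp).comp tendsto_natCast_atTop_atTop
  have ev3 : ∀ᶠ x : ℕ in atTop, 16 * C2 / ε ≤ (x:ℝ)^(2+2*β) :=
    (tend _ (by linarith)).eventually_ge_atTop _
  have ev4 : ∀ᶠ x : ℕ in atTop, 64 * C * CN / ε ≤ (x:ℝ)^(2*β-α) :=
    (tend _ (by linarith)).eventually_ge_atTop _
  have ev5 : ∀ᶠ x : ℕ in atTop, 64 * CN^2 / ε ≤ (x:ℝ)^(1+2*β) :=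
    (tend _ (by linarith)).eventually_ge_atTop _
  filter_upwards [eventually_ge_atTop 1, eventually_ge_atTop N1, ev3, ev4, ev5]
    with x hx1 hxN1 f4 f5 f6
  have hx0 : (0:ℝ) < x := by exact_mod_cast hx1
  have hxR : (1:ℝ) ≤ x := by exact_mod_cast hx1
  set X : ℝ := (x:ℝ)^(2+2*β) with hX_def
  set P : ℝ := (x:ℝ)^α with hP_def
  set Q : ℝ := (x:ℝ)^(2*β-α) with hQ_def
  set R : ℝ := (x:ℝ)^(1+2*β) with hR_def
  have hX0 : (0:ℝ) ≤ X := Real.rpow_nonneg hx0.le _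
  have hP0 : (0:ℝ) ≤ P := Real.rpow_nonneg hx0.le _
  have hQ0 : (0:ℝ) ≤ Q := Real.rpow_nonneg hx0.le _
  have hR0 : (0:ℝ) ≤ R := Real.rpow_nonneg hx0.le _
  have f1 : (x:ℝ)^2 * P * Q = X := by
    rw [hP_def, hQ_def, hX_def, ← Real.rpow_natCast (x:ℝ) 2, ← Real.rpow_add hx0,
      ← Real.rpow_add hx0]
    norm_num
  have f2 : (x:ℝ) * R = X := by
    rw [hR_def, hX_def]
    nth_rewrite 1 [← Real.rpow_one (x:ℝ)]
    rw [← Real.rpow_add hx0]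
    ring_nf
  have f3 : (x:ℝ) * Q * Q ≤ X := by
    have : (x:ℝ) * Q * Q = (x:ℝ)^(1+(4*β-2*α)) := by
      rw [hQ_def]
      nth_rewrite 1 [← Real.rpow_one (x:ℝ)]
      rw [← Real.rpow_add hx0, ← Real.rpow_add hx0]
      ring_nf
    rw [this, hX_def]
    exact Real.rpow_le_rpow_of_exponent_le hxR (by linarith)
  -- the three sum bounds
  have step1 : ∀ n ∈ Finset.range (x+1), (sumFn A n - sumFn B n)^2
      ≤ 2*(((n:ℝ)+1)^2 * (D n)^2) + 2*(∑ m ∈ Finset.range (n+1), D m)^2 := by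
    intro n _
    rw [F4 n]
    have h := sq_sub_le_two (((n:ℝ)+1) * D n) (∑ m ∈ Finset.range (n+1), D m)
    have heq : (((n:ℝ)+1) * D n)^2 = ((n:ℝ)+1)^2 * (D n)^2 := by ring
    linarith
  have hGx := F6 x hx1
  set H : ℝ := CN + (4*c*ε') * Q with hH_def
  have hH0 : 0 ≤ H := by positivity
  have boundE : ∑ n ∈ Finset.range (x+1), (∑ m ∈ Finset.range (n+1), D m)^2
      ≤ ((x:ℝ)+1) * H^2 := by
    have hterm : ∀ n ∈ Finset.range (x+1),
        (∑ m ∈ Finset.range (n+1), D m)^2 ≤ H^2 := by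
      intro n hn
      simp only [Finset.mem_range, Nat.lt_succ_iff] at hn
      have h := (F3 n).trans ((F5 n x hn).trans hGx)
      have h2 := abs_nonneg (∑ m ∈ Finset.range (n+1), D m)
      calc (∑ m ∈ Finset.range (n+1), D m)^2 = |∑ m ∈ Finset.range (n+1), D m|^2 :=
            (sq_abs _).symm
        _ ≤ H^2 := pow_le_pow_left₀ h2 h 2
    calc ∑ n ∈ Finset.range (x+1), (∑ m ∈ Finset.range (n+1), D m)^2
        ≤ ∑ _n ∈ Finset.range (x+1), H^2 := Finset.sum_le_sum hterm
      _ = ((x:ℝ)+1) * H^2 := by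
          rw [Finset.sum_const, Finset.card_range, nsmul_eq_mul]
          push_cast
          ring
  have boundP : ∑ n ∈ Finset.range (x+1), ((n:ℝ)+1)^2 * (D n)^2
      ≤ C2 + 4*(x:ℝ)^2 * (C * P) * G x := by
    rw [Finset.range_eq_Ico, ← Finset.sum_Ico_consecutive _ (Nat.zero_le N1)
      (by omega : N1 ≤ x+1)]
    have e0 : ∑ n ∈ Finset.Ico 0 N1, ((n:ℝ)+1)^2 * (D n)^2 = C2 := by
      rw [hC2_def, Finset.range_eq_Ico]
    have hterm : ∀ n ∈ Finset.Ico N1 (x+1),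
        ((n:ℝ)+1)^2 * (D n)^2 ≤ (4*(x:ℝ)^2 * (C * P)) * |D n| := by
      intro n hn
      simp only [Finset.mem_Ico, Nat.lt_succ_iff] at hn
      have hnx : (n:ℝ) ≤ x := by exact_mod_cast hn.2
      have hDn : |D n| ≤ C * P := by
        have h := hN1 n hn.1
        rw [Real.norm_eq_abs, Real.norm_eq_abs,
          abs_of_nonneg (Real.rpow_nonneg (Nat.cast_nonneg _) _)] at h
        refine h.trans ?_
        rw [hP_def]
        exact mul_le_mul_of_nonneg_left
          (Real.rpow_le_rpow (Nat.cast_nonneg _) hnx hα0) hC.le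
      have hn1 : ((n:ℝ)+1)^2 ≤ 4*(x:ℝ)^2 := by
        have h2x : (n:ℝ)+1 ≤ 2*(x:ℝ) := by linarith
        have := pow_le_pow_left₀ (by linarith : (0:ℝ) ≤ (n:ℝ)+1) h2x 2
        calc ((n:ℝ)+1)^2 ≤ (2*(x:ℝ))^2 := this
          _ = 4*(x:ℝ)^2 := by ring
      have hD0 : (0:ℝ) ≤ |D n| := abs_nonneg _
      have hsq : (D n)^2 ≤ (C * P) * |D n| := by
        calc (D n)^2 = |D n| * |D n| := by rw [← sq_abs]; ring
          _ ≤ (C * P) * |D n| := mul_le_mul_of_nonneg_right hDn hD0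
      calc ((n:ℝ)+1)^2 * (D n)^2 ≤ (4*(x:ℝ)^2) * ((C * P) * |D n|) :=
            mul_le_mul hn1 hsq (sq_nonneg _) (by positivity)
        _ = (4*(x:ℝ)^2 * (C * P)) * |D n| := by ring
    have hsum2 : ∑ n ∈ Finset.Ico N1 (x+1), ((n:ℝ)+1)^2 * (D n)^2
        ≤ (4*(x:ℝ)^2 * (C * P)) * G x := by
      calc ∑ n ∈ Finset.Ico N1 (x+1), ((n:ℝ)+1)^2 * (D n)^2
          ≤ ∑ n ∈ Finset.Ico N1 (x+1), (4*(x:ℝ)^2 * (C * P)) * |D n| :=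
            Finset.sum_le_sum hterm
        _ = (4*(x:ℝ)^2 * (C * P)) * ∑ n ∈ Finset.Ico N1 (x+1), |D n| := by
            rw [Finset.mul_sum]
        _ ≤ (4*(x:ℝ)^2 * (C * P)) * G x := by
            apply mul_le_mul_of_nonneg_left _ (by positivity)
            refine le_trans ?_ (F2 x)
            rw [Finset.range_eq_Ico]
            apply Finset.sum_le_sum_of_subset_of_nonneg
            · apply Finset.Ico_subset_Ico (Nat.zero_le _) (le_refl _)
            · intro i _ _
              exact abs_nonneg _
    linarith
  -- put everything together
  have hsum : ∑ n ∈ Finset.range (x+1), (sumFn A n - sumFn B n)^2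
      ≤ 2*C2 + 8*(x:ℝ)^2*(C*P)*H + 4*(x:ℝ)*H^2 := by
    have hc1 : ∑ n ∈ Finset.range (x+1), (sumFn A n - sumFn B n)^2
        ≤ 2*(∑ n ∈ Finset.range (x+1), ((n:ℝ)+1)^2 * (D n)^2)
          + 2*(∑ n ∈ Finset.range (x+1), (∑ m ∈ Finset.range (n+1), D m)^2) := by
      calc ∑ n ∈ Finset.range (x+1), (sumFn A n - sumFn B n)^2
          ≤ ∑ n ∈ Finset.range (x+1),
              (2*(((n:ℝ)+1)^2 * (D n)^2) + 2*(∑ m ∈ Finset.range (n+1), D m)^2) :=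
            Finset.sum_le_sum step1
        _ = _ := by rw [Finset.sum_add_distrib, ← Finset.mul_sum, ← Finset.mul_sum]
    have hm1 : 4*(x:ℝ)^2 * (C * P) * G x ≤ 4*(x:ℝ)^2 * (C * P) * H :=
      mul_le_mul_of_nonneg_left hGx (by positivity)
    have hx1R : (x:ℝ)+1 ≤ 2*(x:ℝ) := by linarith
    have hm2 : ((x:ℝ)+1) * H^2 ≤ (2*(x:ℝ)) * H^2 :=
      mul_le_mul_of_nonneg_right hx1R (sq_nonneg _)
    linarith [boundP, boundE]
  -- final numeric bounds
  have B1 : 2*C2 ≤ ε/8 * X := by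
    rw [div_le_iff₀ hε] at f4
    linarith
  have B2 : 8*C*CN*((x:ℝ)^2*P) ≤ ε/8 * X := by
    have f5' : 64*C*CN ≤ ε * Q := by
      rw [div_le_iff₀ hε] at f5
      linarith
    have h := mul_le_mul_of_nonneg_right f5' (by positivity : (0:ℝ) ≤ (x:ℝ)^2*P)
    have heq : ε*Q*((x:ℝ)^2*P) = ε * X := by rw [← f1]; ring
    rw [heq] at h
    linarith
  have B3 : 8*(x:ℝ)^2*(C*P)*((4*c*ε')*Q) ≤ ε/4 * X := by
    have h128 : 128*C*c*ε' ≤ ε := by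
      rw [le_div_iff₀ (by positivity : (0:ℝ) < 128*C*c)] at hε'1
      linarith
    have heq : 8*(x:ℝ)^2*(C*P)*((4*c*ε')*Q) = (32*C*c*ε') * ((x:ℝ)^2*P*Q) := by ring
    rw [heq, f1]
    have : (32*C*c*ε') ≤ ε/4 := by linarith
    exact mul_le_mul_of_nonneg_right this hX0
  have B4 : 8*CN^2*(x:ℝ) ≤ ε/8 * X := by
    have f6' : 64*CN^2 ≤ ε * R := by
      rw [div_le_iff₀ hε] at f6
      linarith
    have h := mul_le_mul_of_nonneg_right f6' hx0.le
    have heq : ε*R*(x:ℝ) = ε * X := by rw [← f2]; ring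
    rw [heq] at h
    linarith
  have B5 : 128*c^2*ε'^2*((x:ℝ)*Q*Q) ≤ ε/16 * X := by
    have h1024 : 1024*c^2*ε' ≤ ε := by
      rw [le_div_iff₀ (by positivity : (0:ℝ) < 1024*c^2)] at hε'2
      linarith
    have hsq : ε'^2 ≤ ε' * (1/2) := by
      have h := mul_le_mul_of_nonneg_left hε'_half hε'_pos.le
      calc ε'^2 = ε' * ε' := by ring
        _ ≤ ε' * (1/2) := h
    have hco : 128*c^2*ε'^2 ≤ ε/16 := by
      have h := mul_le_mul_of_nonneg_left hsq (by positivity : (0:ℝ) ≤ 128*c^2)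
      linarith
    calc 128*c^2*ε'^2*((x:ℝ)*Q*Q) ≤ (ε/16) * ((x:ℝ)*Q*Q) :=
          mul_le_mul_of_nonneg_right hco (by positivity)
      _ ≤ ε/16 * X := mul_le_mul_of_nonneg_left f3 (by positivity)
  -- expand H and conclude
  have hexpand : 2*C2 + 8*(x:ℝ)^2*(C*P)*H + 4*(x:ℝ)*H^2
      ≤ 2*C2 + (8*C*CN*((x:ℝ)^2*P) + 8*(x:ℝ)^2*(C*P)*((4*c*ε')*Q))
        + (8*CN^2*(x:ℝ) + 128*c^2*ε'^2*((x:ℝ)*Q*Q)) := by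
    have hHsq : 4*(x:ℝ)*H^2 ≤ 8*CN^2*(x:ℝ) + 128*c^2*ε'^2*((x:ℝ)*Q*Q) := by
      have key : H^2 ≤ 2*CN^2 + 2*((4*c*ε')*Q)^2 := by
        rw [hH_def]
        exact sq_add_le_two CN ((4*c*ε')*Q)
      have h4 := mul_le_mul_of_nonneg_left key (by positivity : (0:ℝ) ≤ 4*(x:ℝ))
      have heq : 4*(x:ℝ)*(2*CN^2 + 2*((4*c*ε')*Q)^2)
          = 8*CN^2*(x:ℝ) + 128*c^2*ε'^2*((x:ℝ)*Q*Q) := by ring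
      linarith
    have hHlin : 8*(x:ℝ)^2*(C*P)*H
        = 8*C*CN*((x:ℝ)^2*P) + 8*(x:ℝ)^2*(C*P)*((4*c*ε')*Q) := by
      rw [hH_def]; ring
    linarith
  rw [Real.norm_eq_abs, Real.norm_eq_abs,
    abs_of_nonneg (Finset.sum_nonneg (fun n _ => sq_nonneg _)),
    abs_of_nonneg (Real.rpow_nonneg hx0.le _)]
  calc ∑ n ∈ Finset.range (x+1), (sumFn A n - sumFn B n)^2
      ≤ 2*C2 + 8*(x:ℝ)^2*(C*P)*H + 4*(x:ℝ)*H^2 := hsum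
    _ ≤ 2*C2 + (8*C*CN*((x:ℝ)^2*P) + 8*(x:ℝ)^2*(C*P)*((4*c*ε')*Q))
        + (8*CN^2*(x:ℝ) + 128*c^2*ε'^2*((x:ℝ)*Q*Q)) := hexpand
    _ ≤ ε/8*X + (ε/8*X + ε/4*X) + (ε/8*X + ε/16*X) := by linarith
    _ ≤ ε * X := by
        have : (0:ℝ) ≤ ε * X := mul_nonneg hε.le hX0
        linarith
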